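/- Let X be a nonempty set, n ≥ 1, and for each p ∈ Fin n let d_p : X × X → ℝ be a pseudometric (nonnegative, zero on the diagonal, symmetric, satisfying the triangle inequality). Define d_max(x,y) = max_p d_p(x,y) and d_min(x,y) = min_p d_p(x,y), and assume X is sequentially compact with respect to d_max (every sequence in X has a subsequence (x_k) and a point x̂ with d_max(x_k, x̂) → 0). Let A, B ⊆ X be nonempty with inf{d_min(a,b) : a ∈ A, b ∈ B} = 0. Then there exist sequences (a_k) in A and (b_k) in B and points â, b̂ ∈ X such that d_min(a_k, â) → 0, d_min(b_k, b̂) → 0, and d_min(â, b̂) = 0. -/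

import Mathlib

/-- The pointwise maximum of a finite family of distance functions. -/
noncomputable def famMax {X : Type*} {n : ℕ} (hn : 1 ≤ n)
    (d : Fin n → X → X → ℝ) (x y : X) : ℝ :=
  Finset.univ.sup' (Finset.univ_nonempty_iff.mpr ⟨⟨0, hn⟩⟩) (fun p => d p x y)

/-- The pointwise minimum of a finite family of distance functions. -/
noncomputable def famMin {X : Type*} {n : ℕ} (hn : 1 ≤ n)
    (d : Fin n → X → X → ℝ) (x y : X) : ℝ :=
  Finset.univ.inf' (Finset.univ_nonempty_iff.mpr ⟨⟨0, hn⟩⟩) (fun p => d p x y)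

/-- Set-distance condition for the minimum distance of a finite family of
pseudometrics: if `X` is sequentially compact w.r.t. `d_max` and nonempty sets
`A`, `B` satisfy `inf{d_min(a,b) | a ∈ A, b ∈ B} = 0`, then there are sequences
in `A` and `B` converging (w.r.t. `d_min`) to points `â`, `b̂` with
`d_min(â,b̂) = 0`. -/
theorem min_set_distance_zero_limits {X : Type*} [Nonempty X] {n : ℕ}
    (hn : 1 ≤ n) (d : Fin n → X → X → ℝ)
    (hnonneg : ∀ p x y, 0 ≤ d p x y)
    (hrefl : ∀ p x, d p x x = 0)
    (hsymm : ∀ p x y, d p x y = d p y x)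
    (htri : ∀ p x y z, d p x z ≤ d p x y + d p y z)
    (hseq : ∀ x : ℕ → X, ∃ φ : ℕ → ℕ, StrictMono φ ∧ ∃ xhat : X,
      Filter.Tendsto (fun k => famMax hn d (x (φ k)) xhat) Filter.atTop (nhds 0))
    (A B : Set X) (hA : A.Nonempty) (hB : B.Nonempty)
    (hinf : sInf {r : ℝ | ∃ a ∈ A, ∃ b ∈ B, famMin hn d a b = r} = 0) :
    ∃ (a b : ℕ → X) (ahat bhat : X),
      (∀ k, a k ∈ A) ∧ (∀ k, b k ∈ B) ∧
      Filter.Tendsto (fun k => famMin hn d (a k) ahat) Filter.atTop (nhds 0) ∧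
      Filter.Tendsto (fun k => famMin hn d (b k) bhat) Filter.atTop (nhds 0) ∧
      famMin hn d ahat bhat = 0 := by
  have hmin_nonneg : ∀ x y, 0 ≤ famMin hn d x y := fun x y =>
    Finset.le_inf' _ _ (fun p _ => hnonneg p x y)
  have hmin_le : ∀ p (x y : X), famMin hn d x y ≤ d p x y := fun p x y =>
    Finset.inf'_le _ (Finset.mem_univ p)
  have hle_max : ∀ p (x y : X), d p x y ≤ famMax hn d x y := fun p x y =>
    Finset.le_sup' (fun q => d q x y) (Finset.mem_univ p)
  have hmin_le_max : ∀ x y, famMin hn d x y ≤ famMax hn d x y :=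
    fun x y => (hmin_le ⟨0, hn⟩ x y).trans (hle_max ⟨0, hn⟩ x y)
  have hmax_symm : ∀ x y, famMax hn d x y = famMax hn d y x := by
    intro x y
    unfold famMax
    congr 1
    ext p
    exact hsymm p x y
  -- pick approximating pairs
  have hS : {r : ℝ | ∃ a ∈ A, ∃ b ∈ B, famMin hn d a b = r}.Nonempty := by
    obtain ⟨a, ha⟩ := hA; obtain ⟨b, hb⟩ := hB
    exact ⟨_, a, ha, b, hb, rfl⟩
  have hpick : ∀ k : ℕ, ∃ a ∈ A, ∃ b ∈ B, famMin hn d a b < 1 / (k + 1) := by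
    intro k
    have hlt : sInf {r : ℝ | ∃ a ∈ A, ∃ b ∈ B, famMin hn d a b = r} < 1 / (k + 1) := by
      rw [hinf]; positivity
    obtain ⟨r, ⟨a, ha, b, hb, hr⟩, hrlt⟩ := exists_lt_of_csInf_lt hS hlt
    exact ⟨a, ha, b, hb, hr ▸ hrlt⟩
  choose a ha b hb hab using hpick
  obtain ⟨φ, hφ, ahat, hac⟩ := hseq a
  obtain ⟨ψ, hψ, bhat, hbc⟩ := hseq (fun k => b (φ k))
  refine ⟨fun k => a (φ (ψ k)), fun k => b (φ (ψ k)), ahat, bhat,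
    fun k => ha _, fun k => hb _, ?_, ?_, ?_⟩
  · -- famMin (a' k) ahat → 0
    have h1 : Filter.Tendsto (fun k => famMax hn d (a (φ (ψ k))) ahat)
        Filter.atTop (nhds 0) := hac.comp hψ.tendsto_atTop
    exact squeeze_zero (fun k => hmin_nonneg _ _) (fun k => hmin_le_max _ _) h1
  · exact squeeze_zero (fun k => hmin_nonneg _ _) (fun k => hmin_le_max _ _) hbc
  · -- famMin ahat bhat = 0
    have h1 : Filter.Tendsto (fun k => famMax hn d (a (φ (ψ k))) ahat)
        Filter.atTop (nhds 0) := hac.comp hψ.tendsto_atTop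
    have h2 : Filter.Tendsto (fun k : ℕ => (1 : ℝ) / (k + 1))
        Filter.atTop (nhds 0) := tendsto_one_div_add_atTop_nhds_zero_nat
    have h3 : Filter.Tendsto (fun k => famMin hn d (a (φ (ψ k))) (b (φ (ψ k))))
        Filter.atTop (nhds 0) := by
      refine squeeze_zero (fun k => hmin_nonneg _ _) (fun k => ?_) h2
      refine (hab (φ (ψ k))).le.trans ?_
      have hk : (k : ℝ) + 1 ≤ (φ (ψ k) : ℝ) + 1 := by
        have := (hφ.comp hψ).id_le k
        simp only [Function.comp] at this
        exact_mod_cast Nat.succ_le_succ this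
      exact one_div_le_one_div_of_le (by positivity) hk
    have hsum : Filter.Tendsto
        (fun k => famMax hn d (a (φ (ψ k))) ahat
          + famMin hn d (a (φ (ψ k))) (b (φ (ψ k)))
          + famMax hn d (b (φ (ψ k))) bhat) Filter.atTop (nhds 0) := by
      have := (h1.add h3).add hbc
      simpa using this
    have hbdd : ∀ k, famMin hn d ahat bhat ≤
        famMax hn d (a (φ (ψ k))) ahat
          + famMin hn d (a (φ (ψ k))) (b (φ (ψ k)))
          + famMax hn d (b (φ (ψ k))) bhat := by
      intro k
      obtain ⟨p, -, hp⟩ := Finset.exists_mem_eq_inf' (s := (Finset.univ : Finset (Fin n)))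
        (Finset.univ_nonempty_iff.mpr ⟨⟨0, hn⟩⟩)
        (fun p => d p (a (φ (ψ k))) (b (φ (ψ k))))
      calc famMin hn d ahat bhat ≤ d p ahat bhat := hmin_le p _ _
        _ ≤ d p ahat (a (φ (ψ k))) + d p (a (φ (ψ k))) bhat := htri p _ _ _
        _ ≤ d p ahat (a (φ (ψ k))) + (d p (a (φ (ψ k))) (b (φ (ψ k)))
              + d p (b (φ (ψ k))) bhat) := by
            exact add_le_add (le_refl _) (htri p _ _ _)
        _ ≤ famMax hn d (a (φ (ψ k))) ahat
              + (famMin hn d (a (φ (ψ k))) (b (φ (ψ k))) + famMax hn d (b (φ (ψ k))) bhat) := by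
            refine add_le_add ?_ (add_le_add ?_ (hle_max p _ _))
            · rw [hsymm p ahat _]; exact hle_max p _ _
            · rw [famMin, hp]
        _ = _ := by ring
    have hle0 : famMin hn d ahat bhat ≤ 0 := ge_of_tendsto' hsum hbdd
    exact le_antisymm hle0 (hmin_nonneg _ _)
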